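/- Let f be a nonzero polynomial with integer coefficients and n ≥ 1 an integer such that Res(t^n − 1, f(t)) ≠ 0. Then Res(t^n − 1, f(t)) > 0 if and only if either (i) n is even and f(1)·f(−1) > 0, or (ii) n is odd and f(1) > 0. -/

import Mathlib

/-- The `n`-th cyclic resultant of `f ∈ ℤ[t]`, computed in `ℂ` as
`Res(t^n − 1, f(t)) = ∏_{ζ^n = 1} f(ζ)`, the product over all complex `n`-th roots of unity. -/
noncomputable def cyclicResultantC (n : ℕ) (f : Polynomial ℤ) : ℂ :=
  ((Polynomial.nthRoots n (1 : ℂ)).map (fun ζ => Polynomial.aeval ζ f)).prod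

open Polynomial Complex in
private lemma aux_conj_prod (h : ℂ → ℂ)
    (hc : ∀ z, h ((starRingEnd ℂ) z) = (starRingEnd ℂ) (h z)) :
    ∀ s : Finset ℂ, (∀ z ∈ s, (starRingEnd ℂ) z ∈ s) → (∀ z ∈ s, z.im ≠ 0) →
      (∀ z ∈ s, h z ≠ 0) →
      0 < (∏ z ∈ s, h z).re ∧ (∏ z ∈ s, h z).im = 0 := by
  intro s
  induction s using Finset.strongInduction with
  | _ s ih =>
    intro hcl hnr hnz
    rcases s.eq_empty_or_nonempty with rfl | ⟨a, ha⟩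
    · simp
    · have hca : (starRingEnd ℂ) a ∈ s := hcl a ha
      have hne : (starRingEnd ℂ) a ≠ a := by
        intro hca'
        apply hnr a ha
        have := congrArg Complex.im hca'
        simp only [Complex.conj_im] at this
        linarith
      set c := (starRingEnd ℂ) a with hcdef
      set t := (s.erase a).erase c with htdef
      have hts : t ⊂ s := by
        refine Finset.ssubset_of_subset_of_ssubset ?_ (Finset.erase_ssubset ha)
        exact Finset.erase_subset _ _
      have hmem : ∀ z ∈ t, z ∈ s ∧ z ≠ a ∧ z ≠ c := by
        intro z hz
        simp only [htdef, Finset.mem_erase] at hz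
        exact ⟨hz.2.2, hz.2.1, hz.1⟩
      have htcl : ∀ z ∈ t, (starRingEnd ℂ) z ∈ t := by
        intro z hz
        obtain ⟨hzs, hza, hzc⟩ := hmem z hz
        simp only [htdef, Finset.mem_erase]
        refine ⟨?_, ?_, hcl z hzs⟩
        · intro hzc'
          apply hza
          have := congrArg (starRingEnd ℂ) hzc'
          simpa [hcdef] using this
        · intro hza'
          apply hzc
          have := congrArg (starRingEnd ℂ) hza'
          simpa [hcdef] using this
      have ihres := ih t hts htcl (fun z hz => hnr z (hmem z hz).1)
        (fun z hz => hnz z (hmem z hz).1)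
      have hsplit : ∏ z ∈ s, h z = h a * (h c * ∏ z ∈ t, h z) := by
        rw [← Finset.mul_prod_erase s h ha,
          ← Finset.mul_prod_erase (s.erase a) h (Finset.mem_erase.mpr ⟨hne, hca⟩)]
      have hhc : h a * h c = (Complex.normSq (h a) : ℂ) := by
        rw [hcdef, hc a, Complex.mul_conj]
      have hpos : 0 < Complex.normSq (h a) :=
        Complex.normSq_pos.mpr (hnz a ha)
      rw [hsplit, ← mul_assoc, hhc]
      constructor
      · simp only [Complex.mul_re, Complex.ofReal_re, Complex.ofReal_im, zero_mul, sub_zero]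
        exact mul_pos hpos ihres.1
      · simp only [Complex.mul_im, Complex.ofReal_re, Complex.ofReal_im, zero_mul, add_zero]
        rw [ihres.2]; ring

private lemma real_pow_eq_one (x : ℝ) (n : ℕ) (hn : 1 ≤ n) (hx : x ^ n = 1) :
    x = 1 ∨ x = -1 := by
  have hn0 : n ≠ 0 := by omega
  have habs : |x| = 1 := by
    rcases lt_trichotomy |x| 1 with h | h | h
    · have h2 : |x| ^ n < 1 := pow_lt_one₀ (abs_nonneg x) h hn0
      rw [← abs_pow, hx] at h2; simp at h2
    · exact h
    · have h2 : (1:ℝ) < |x| ^ n := one_lt_pow₀ h hn0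
      rw [← abs_pow, hx] at h2; simp at h2
  rcases abs_eq (by norm_num : (0:ℝ) ≤ 1) |>.mp habs with h | h
  · exact Or.inl h
  · exact Or.inr h

/-- For nonzero `f ∈ ℤ[t]` and `n ≥ 1` with `Res(t^n − 1, f(t)) ≠ 0`, the
cyclic resultant is positive iff either `n` is even and `f(1)·f(−1) > 0`, or `n` is odd and
`f(1) > 0`. -/
theorem cyclic_resultant_pos_iff
    (f : Polynomial ℤ) (hf : f ≠ 0) (n : ℕ) (hn : 1 ≤ n)
    (R : ℤ) (hR : (R : ℂ) = cyclicResultantC n f) (hR0 : R ≠ 0) :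
    0 < R ↔ (Even n ∧ 0 < f.eval 1 * f.eval (-1)) ∨ (Odd n ∧ 0 < f.eval 1) := by
  classical
  have hn0 : n ≠ 0 := by omega
  have hnpos : 0 < n := hn
  obtain hprim := Complex.isPrimitiveRoot_exp n hn0
  have hnodup : (Polynomial.nthRoots n (1 : ℂ)).Nodup := hprim.nthRoots_one_nodup
  set S : Finset ℂ := Polynomial.nthRootsFinset n (1 : ℂ) with hSdef
  have hSval : S.val = Polynomial.nthRoots n (1 : ℂ) := by
    rw [hSdef, Polynomial.nthRootsFinset]
    exact Multiset.dedup_eq_self.mpr hnodup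
  set h : ℂ → ℂ := fun z => Polynomial.aeval z f with hhdef
  have hRS : (R : ℂ) = ∏ z ∈ S, h z := by
    rw [hR, cyclicResultantC, Finset.prod, hSval]
  -- the evaluation commutes with conjugation
  have hconj : ∀ z, h ((starRingEnd ℂ) z) = (starRingEnd ℂ) (h z) := by
    intro z
    simp only [hhdef, Polynomial.aeval_def]
    rw [Polynomial.hom_eval₂]
    congr 1
    exact RingHom.ext_int _ _
  have hScl : ∀ z ∈ S, (starRingEnd ℂ) z ∈ S := by
    intro z hz
    rw [hSdef, Polynomial.mem_nthRootsFinset hnpos] at hz ⊢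
    rw [← map_pow, hz, map_one]
  have hSnz : ∀ z ∈ S, h z ≠ 0 := by
    intro z hz
    have : (∏ z ∈ S, h z) ≠ 0 := by
      rw [← hRS]; exact_mod_cast hR0
    exact Finset.prod_ne_zero_iff.mp this z hz
  -- real elements of S are 1 and -1
  have hreal : ∀ z ∈ S, z.im = 0 → z = 1 ∨ z = -1 := by
    intro z hz him
    rw [hSdef, Polynomial.mem_nthRootsFinset hnpos] at hz
    have hz' : z = (z.re : ℂ) := Complex.ext rfl (by simp [him])
    have : ((z.re : ℂ)) ^ n = 1 := by rw [← hz']; exact hz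
    have hre : z.re ^ n = 1 := by exact_mod_cast this
    rcases real_pow_eq_one z.re n hn hre with h1 | h1
    · left; rw [hz', h1]; norm_num
    · right; rw [hz', h1]; norm_num
  have h1S : (1 : ℂ) ∈ S := Polynomial.one_mem_nthRootsFinset hnpos
  have hh1 : h 1 = ((f.eval 1 : ℤ) : ℂ) := by
    simp only [hhdef, Polynomial.aeval_def]
    rw [Polynomial.eval₂_at_one]
    simp
  have hhneg1 : h (-1) = ((f.eval (-1) : ℤ) : ℂ) := by
    simp only [hhdef, Polynomial.aeval_def]
    have h2 := Polynomial.eval₂_at_apply (p := f) (algebraMap ℤ ℂ) (-1)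
    simp only [map_neg, map_one] at h2
    rw [h2]
    simp
  rcases Nat.even_or_odd n with hpar | hpar
  · -- even case
    have hneg1S : (-1 : ℂ) ∈ S := by
      rw [hSdef, Polynomial.mem_nthRootsFinset hnpos]
      exact Even.neg_one_pow hpar
    have hne : (-1 : ℂ) ≠ 1 := by norm_num
    set T : Finset ℂ := (S.erase 1).erase (-1) with hTdef
    have hTmem : ∀ z ∈ T, z ∈ S ∧ z ≠ 1 ∧ z ≠ -1 := by
      intro z hz
      simp only [hTdef, Finset.mem_erase] at hz
      exact ⟨hz.2.2, hz.2.1, hz.1⟩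
    have hTnr : ∀ z ∈ T, z.im ≠ 0 := by
      intro z hz him
      obtain ⟨hzS, hz1, hzn1⟩ := hTmem z hz
      rcases hreal z hzS him with rfl | rfl
      · exact hz1 rfl
      · exact hzn1 rfl
    have hTcl : ∀ z ∈ T, (starRingEnd ℂ) z ∈ T := by
      intro z hz
      obtain ⟨hzS, hz1, hzn1⟩ := hTmem z hz
      simp only [hTdef, Finset.mem_erase]
      refine ⟨?_, ?_, hScl z hzS⟩
      · intro hc; apply hzn1
        have := congrArg (starRingEnd ℂ) hc
        simpa using this
      · intro hc; apply hz1
        have := congrArg (starRingEnd ℂ) hc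
        simpa using this
    obtain ⟨hPre, hPim⟩ := aux_conj_prod h hconj T hTcl hTnr
      (fun z hz => hSnz z (hTmem z hz).1)
    set P := ∏ z ∈ T, h z with hPdef
    have hsplit : (R : ℂ) = ((f.eval 1 : ℤ) : ℂ) * (((f.eval (-1) : ℤ) : ℂ) * P) := by
      rw [hRS, ← Finset.mul_prod_erase S h h1S,
        ← Finset.mul_prod_erase (S.erase 1) h (Finset.mem_erase.mpr ⟨hne, hneg1S⟩),
        hh1, hhneg1]
    have hPeq : P = ((P.re : ℝ) : ℂ) := Complex.ext rfl (by simp [hPim])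
    have hRreal : (R : ℝ) = ((f.eval 1 : ℤ) : ℝ) * (((f.eval (-1) : ℤ) : ℝ) * P.re) := by
      have : ((R : ℝ) : ℂ) = ((((f.eval 1 : ℤ) : ℝ) * (((f.eval (-1) : ℤ) : ℝ) * P.re) : ℝ) : ℂ) := by
        push_cast
        rw [← hPeq]
        push_cast at hsplit
        exact hsplit
      exact_mod_cast this
    have key : (0 : ℤ) < R ↔ 0 < f.eval 1 * f.eval (-1) := by
      have h1 : (0:ℝ) < (R:ℝ) ↔ 0 < ((f.eval 1 * f.eval (-1) : ℤ) : ℝ) := by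
        rw [hRreal, ← mul_assoc, mul_pos_iff_of_pos_right hPre]
        norm_cast
      exact_mod_cast h1
    rw [key]
    simp [hpar, Nat.not_odd_iff_even.mpr hpar]
  · -- odd case
    have hneg1S : (-1 : ℂ) ∉ S := by
      rw [hSdef, Polynomial.mem_nthRootsFinset hnpos]
      intro hc
      have : Even n := by
        rcases Nat.even_or_odd n with he | ho
        · exact he
        · rw [Odd.neg_one_pow ho] at hc; norm_num at hc
      exact (Nat.not_even_iff_odd.mpr hpar) this
    set T : Finset ℂ := S.erase 1 with hTdef
    have hTmem : ∀ z ∈ T, z ∈ S ∧ z ≠ 1 := by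
      intro z hz
      simp only [hTdef, Finset.mem_erase] at hz
      exact ⟨hz.2, hz.1⟩
    have hTnr : ∀ z ∈ T, z.im ≠ 0 := by
      intro z hz him
      obtain ⟨hzS, hz1⟩ := hTmem z hz
      rcases hreal z hzS him with rfl | rfl
      · exact hz1 rfl
      · exact hneg1S hzS
    have hTcl : ∀ z ∈ T, (starRingEnd ℂ) z ∈ T := by
      intro z hz
      obtain ⟨hzS, hz1⟩ := hTmem z hz
      simp only [hTdef, Finset.mem_erase]
      refine ⟨?_, hScl z hzS⟩
      intro hc; apply hz1
      have := congrArg (starRingEnd ℂ) hc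
      simpa using this
    obtain ⟨hPre, hPim⟩ := aux_conj_prod h hconj T hTcl hTnr
      (fun z hz => hSnz z (hTmem z hz).1)
    set P := ∏ z ∈ T, h z with hPdef
    have hsplit : (R : ℂ) = ((f.eval 1 : ℤ) : ℂ) * P := by
      rw [hRS, ← Finset.mul_prod_erase S h h1S, hh1]
    have hPeq : P = ((P.re : ℝ) : ℂ) := Complex.ext rfl (by simp [hPim])
    have hRreal : (R : ℝ) = ((f.eval 1 : ℤ) : ℝ) * P.re := by
      have : ((R : ℝ) : ℂ) = ((((f.eval 1 : ℤ) : ℝ) * P.re : ℝ) : ℂ) := by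
        push_cast
        rw [← hPeq]
        push_cast at hsplit
        exact hsplit
      exact_mod_cast this
    have key : (0 : ℤ) < R ↔ 0 < f.eval 1 := by
      have h1 : (0:ℝ) < (R:ℝ) ↔ 0 < ((f.eval 1 : ℤ) : ℝ) := by
        rw [hRreal, mul_pos_iff_of_pos_right hPre]
      exact_mod_cast h1
    rw [key]
    simp [hpar, Nat.not_even_iff_odd.mpr hpar]
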